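/- Let a ≤ b be real numbers, and let μ be the signed (in fact positive) Borel measure on ℝ given by μ = (1/2)(δ_a + λ|_{[a,b]} + δ_b), where δ_x is the Dirac measure at x and λ|_{[a,b]} is Lebesgue measure restricted to [a,b]. Then ∫ exp(-|x − y|) dμ(y) = 1 for every x ∈ [a,b], i.e., μ is a weight measure on the interval [a,b] with the Euclidean metric, and consequently the magnitude of [a,b] equals μ(ℝ) = 1 + (b − a)/2. -/

import Mathlib

open Matrix BigOperators MeasureTheory
open scoped ENNReal

/-- The magnitude of a finite subset `s` of a metric space: the sum of the entries of
the inverse of the similarity matrix `[exp (-d(a,b))]_{a,b ∈ s}`. -/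
noncomputable def finMag {X : Type*} [MetricSpace X] (s : Finset X) : ℝ :=
  letI : DecidableEq X := Classical.decEq X
  ∑ a : {x // x ∈ s}, ∑ b : {x // x ∈ s},
    (Matrix.of fun a b : {x // x ∈ s} => Real.exp (-dist (a : X) (b : X)))⁻¹ a b

/-- The magnitude of a compact positive definite metric space, as the supremum of the
magnitudes of its finite nonempty subsets. -/
noncomputable def mag {X : Type*} [MetricSpace X] (A : Set X) : ℝ :=
  sSup {m : ℝ | ∃ s : Finset X, s.Nonempty ∧ ↑s ⊆ A ∧ m = finMag s}

noncomputable def gfun (t : ℝ) : ℝ := 1 - 2 / (Real.exp t + 1)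

lemma exp_add_one_pos (t : ℝ) : (0:ℝ) < Real.exp t + 1 := by positivity

lemma hasDerivAt_gfun (t : ℝ) :
    HasDerivAt gfun (2 * Real.exp t / (Real.exp t + 1) ^ 2) t := by
  have h1 : HasDerivAt (fun s => Real.exp s + 1) (Real.exp t) t :=
    (Real.hasDerivAt_exp t).add_const 1
  have h2 := (h1.inv (ne_of_gt (exp_add_one_pos t))).const_mul (2:ℝ)
  have h3 := (hasDerivAt_const t (1:ℝ)).sub h2
  have he : (0:ℝ) < Real.exp t + 1 := exp_add_one_pos t
  have h4 : gfun = fun x => 1 - 2 * (Real.exp x + 1)⁻¹ := by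
    funext s; simp [gfun, div_eq_mul_inv]
  rw [h4]
  refine h3.congr_deriv ?_
  ring

lemma gfun_eq (t : ℝ) : gfun t = (Real.exp t - 1) / (Real.exp t + 1) := by
  have he := exp_add_one_pos t
  rw [gfun]
  field_simp
  ring

lemma gfun_nonneg {t : ℝ} (ht : 0 ≤ t) : 0 ≤ gfun t := by
  rw [gfun_eq]
  have h1 : (1:ℝ) ≤ Real.exp t := Real.one_le_exp ht
  have h2 := exp_add_one_pos t
  exact div_nonneg (by linarith) (by linarith)

lemma gfun_zero : gfun 0 = 0 := by simp [gfun_eq]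

lemma gfun_le_half {t : ℝ} (ht : 0 ≤ t) : gfun t ≤ t / 2 := by
  set h : ℝ → ℝ := fun s => s / 2 - gfun s with hh
  have hd : ∀ s, HasDerivAt h ((Real.exp s - 1)^2 / (2 * (Real.exp s + 1)^2)) s := by
    intro s
    have := (hasDerivAt_id s).div_const 2 |>.sub (hasDerivAt_gfun s)
    refine this.congr_deriv ?_
    have := exp_add_one_pos s
    field_simp
    ring
  have hmono : Monotone h := by
    apply monotone_of_deriv_nonneg
    · exact fun s => (hd s).differentiableAt
    · intro s
      rw [(hd s).deriv]
      apply div_nonneg (sq_nonneg _)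
      positivity
  have := hmono ht
  simp [hh, gfun_zero] at this
  linarith

lemma gfun_ge {t : ℝ} (ht : 0 ≤ t) : t / 2 - t^3 / 6 ≤ gfun t := by
  set h : ℝ → ℝ := fun s => gfun s - s / 2 + s^3 / 6 with hh
  have hd : ∀ s, HasDerivAt h (s^2 / 2 - (Real.exp s - 1)^2 / (2 * (Real.exp s + 1)^2)) s := by
    intro s
    have h1 := ((hasDerivAt_gfun s).sub ((hasDerivAt_id s).div_const 2)).add
      ((hasDerivAt_pow 3 s).div_const 6)
    refine h1.congr_deriv ?_
    have := exp_add_one_pos s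
    field_simp
    ring
  have hmono : MonotoneOn h (Set.Ici 0) := by
    apply monotoneOn_of_deriv_nonneg (convex_Ici 0)
    · exact (Differentiable.continuous (fun s => (hd s).differentiableAt)).continuousOn
    · exact fun s _ => ((hd s).differentiableAt).differentiableWithinAt
    · intro s hs
      rw [interior_Ici] at hs
      have hs0 : (0:ℝ) ≤ s := le_of_lt hs
      rw [(hd s).deriv]
      have hg1 : (Real.exp s - 1) / (Real.exp s + 1) = gfun s := (gfun_eq s).symm
      have hg2 : gfun s ≤ s / 2 := gfun_le_half hs0
      have hg3 : 0 ≤ gfun s := gfun_nonneg hs0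
      have hsq : ((Real.exp s - 1) / (Real.exp s + 1))^2 ≤ (s/2)^2 := by
        rw [hg1]
        exact pow_le_pow_left₀ hg3 hg2 2
      have hpos := exp_add_one_pos s
      have : (Real.exp s - 1)^2 / (2 * (Real.exp s + 1)^2)
          = ((Real.exp s - 1) / (Real.exp s + 1))^2 / 2 := by
        rw [div_pow, div_div]
        ring
      rw [this]
      nlinarith [sq_nonneg s]
  have := hmono (Set.self_mem_Ici) (Set.mem_Ici.2 ht) ht
  simp [hh, gfun_zero] at this
  linarith

/-! ### Matrix part -/

noncomputable def uN (x : ℕ → ℝ) (m : ℕ) : ℝ :=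
  if m = 0 then 1 else 1 - Real.exp (x (m - 1) - x m)

noncomputable def dN (x : ℕ → ℝ) (m : ℕ) : ℝ :=
  if m = 0 then 1 else 1 - Real.exp (x (m - 1) - x m) ^ 2

noncomputable def Emat (n : ℕ) (x : ℕ → ℝ) : Matrix (Fin (n+1)) (Fin (n+1)) ℝ :=
  Matrix.of fun i j => Real.exp (-|x i - x j|)

noncomputable def Lmat (n : ℕ) (x : ℕ → ℝ) : Matrix (Fin (n+1)) (Fin (n+1)) ℝ :=
  Matrix.of fun i j => if j ≤ i then Real.exp (x j - x i) else 0

lemma tele (F : ℕ → ℝ) (i : ℕ) :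
    ∑ j ∈ Finset.range (i+1), (F j - if j = 0 then 0 else F (j-1)) = F i := by
  induction i with
  | zero => simp
  | succ i ih =>
    rw [Finset.sum_range_succ, ih]
    simp only [Nat.add_sub_cancel, if_neg (Nat.succ_ne_zero i)]
    ring

lemma sum_ite_le (n : ℕ) (i : Fin (n+1)) (f : ℕ → ℝ) :
    ∑ j : Fin (n+1), (if j ≤ i then f j.val else 0)
      = ∑ j ∈ Finset.range (i.val+1), f j := by
  have h1 : ∑ j : Fin (n+1), (if j ≤ i then f j.val else 0)
      = ∑ j ∈ Finset.range (n+1), (if j ≤ i.val then f j else 0) := by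
    rw [← Fin.sum_univ_eq_sum_range (fun j => if j ≤ i.val then f j else 0) (n+1)]
    apply Finset.sum_congr rfl
    intro j _
    simp only [Fin.le_def]
  rw [h1]
  rw [← Finset.sum_subset (Finset.range_subset_range.2 (Nat.succ_le_succ i.is_le))]
  · apply Finset.sum_congr rfl
    intro j hj
    rw [if_pos (Nat.lt_succ_iff.1 (Finset.mem_range.1 hj))]
  · intro j _ hj
    rw [if_neg]
    intro hji
    exact hj (Finset.mem_range.2 (Nat.lt_succ_iff.2 hji))

lemma Lmat_mulVec_u (n : ℕ) (x : ℕ → ℝ) (i : Fin (n+1)) :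
    ∑ j : Fin (n+1), Lmat n x i j * uN x j.val = 1 := by
  have hterm : ∀ j : Fin (n+1), Lmat n x i j * uN x j.val
      = if j ≤ i then (fun m => Real.exp (-(x i.val)) *
          (Real.exp (x m) - if m = 0 then 0 else Real.exp (x (m - 1)))) j.val else 0 := by
    intro j
    simp only [Lmat, Matrix.of_apply, ite_mul, zero_mul]
    by_cases hji : j ≤ i
    · rw [if_pos hji, if_pos hji]
      simp only [uN]
      by_cases hj0 : j.val = 0
      · rw [if_pos hj0, if_pos hj0, mul_one, sub_zero, ← Real.exp_add]
        congr 1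
        ring
      · rw [if_neg hj0, if_neg hj0]
        simp only [Real.exp_sub, Real.exp_neg]
        have h1 := Real.exp_ne_zero (x i.val)
        have h2 := Real.exp_ne_zero (x j.val)
        field_simp
    · rw [if_neg hji, if_neg hji]
  rw [Finset.sum_congr rfl (fun j _ => hterm j),
    sum_ite_le n i (fun m => Real.exp (-(x i.val)) *
      (Real.exp (x m) - if m = 0 then 0 else Real.exp (x (m - 1)))),
    ← Finset.mul_sum, tele (fun m => Real.exp (x m)) i.val, ← Real.exp_add]
  simp

lemma LDL_entry (n : ℕ) (x : ℕ → ℝ) (hx : StrictMono x) (i k : Fin (n+1)) (hik : i ≤ k) :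
    ∑ j : Fin (n+1), Lmat n x i j * dN x j.val * Lmat n x k j
      = Real.exp (x i.val - x k.val) := by
  have hterm : ∀ j : Fin (n+1), Lmat n x i j * dN x j.val * Lmat n x k j
      = if j ≤ i then (fun m => (Real.exp (-(x i.val)) * Real.exp (-(x k.val))) *
          (Real.exp (x m) ^ 2 - if m = 0 then 0 else Real.exp (x (m - 1)) ^ 2)) j.val
        else 0 := by
    intro j
    simp only [Lmat, Matrix.of_apply, ite_mul, zero_mul, mul_ite, mul_zero]
    by_cases hji : j ≤ i
    · rw [if_pos hji, if_pos (le_trans hji hik), if_pos hji]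
      simp only [dN]
      by_cases hj0 : j.val = 0
      · rw [if_pos hj0, if_pos hj0, mul_one, sub_zero]
        rw [Real.exp_sub, Real.exp_sub, Real.exp_neg, Real.exp_neg]
        have h1 := Real.exp_ne_zero (x i.val)
        have h2 := Real.exp_ne_zero (x k.val)
        field_simp
      · rw [if_neg hj0, if_neg hj0]
        simp only [Real.exp_sub, Real.exp_neg]
        have h1 := Real.exp_ne_zero (x i.val)
        have h2 := Real.exp_ne_zero (x k.val)
        have h3 := Real.exp_ne_zero (x j.val)
        field_simp
    · rw [if_neg hji, if_neg hji]
      split <;> rfl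
  rw [Finset.sum_congr rfl (fun j _ => hterm j),
    sum_ite_le n i (fun m => (Real.exp (-(x i.val)) * Real.exp (-(x k.val))) *
      (Real.exp (x m) ^ 2 - if m = 0 then 0 else Real.exp (x (m - 1)) ^ 2)),
    ← Finset.mul_sum, tele (fun m => Real.exp (x m) ^ 2) i.val]
  rw [← Real.exp_add, sq, ← Real.exp_add, ← Real.exp_add]
  congr 1
  ring

lemma LDL (n : ℕ) (x : ℕ → ℝ) (hx : StrictMono x) :
    Lmat n x * Matrix.diagonal (fun j : Fin (n+1) => dN x j.val) * (Lmat n x)ᵀ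
      = Emat n x := by
  ext i k
  rw [Matrix.mul_apply]
  simp only [Matrix.mul_diagonal, Matrix.transpose_apply]
  rcases le_total i k with h | h
  · rw [LDL_entry n x hx i k h]
    have : |x i.val - x k.val| = x k.val - x i.val := by
      rw [abs_sub_comm]
      exact abs_of_nonneg (sub_nonneg.2 (hx.monotone (Fin.le_def.1 h)))
    simp only [Emat, Matrix.of_apply, this]
    congr 1
    ring
  · have hsym : ∀ j, Lmat n x i j * dN x j.val * Lmat n x k j
        = Lmat n x k j * dN x j.val * Lmat n x i j := by
      intro j; ring
    rw [Finset.sum_congr rfl (fun j _ => hsym j), LDL_entry n x hx k i h]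
    have : |x i.val - x k.val| = x i.val - x k.val :=
      abs_of_nonneg (sub_nonneg.2 (hx.monotone (Fin.le_def.1 h)))
    simp only [Emat, Matrix.of_apply, this]
    congr 1
    ring

lemma Lmat_det (n : ℕ) (x : ℕ → ℝ) : (Lmat n x).det = 1 := by
  rw [Matrix.det_of_lowerTriangular (Lmat n x)]
  · simp [Lmat]
  · intro i j hij
    simp only [Lmat, Matrix.of_apply]
    rw [if_neg]
    exact fun h => absurd (lt_of_lt_of_le hij h) (lt_irrefl _)

lemma dN_pos (n : ℕ) (x : ℕ → ℝ) (hx : StrictMono x) (j : Fin (n+1)) :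
    0 < dN x j.val := by
  simp only [dN]
  by_cases hj0 : j.val = 0
  · rw [if_pos hj0]; norm_num
  · rw [if_neg hj0]
    have hlt : x (j.val - 1) < x j.val := hx (Nat.sub_lt (Nat.pos_of_ne_zero hj0) one_pos)
    have h1 : Real.exp (x (j.val - 1) - x j.val) < 1 :=
      Real.exp_lt_one_iff.2 (by linarith)
    have h2 : 0 < Real.exp (x (j.val - 1) - x j.val) := Real.exp_pos _
    nlinarith

lemma Emat_det_isUnit (n : ℕ) (x : ℕ → ℝ) (hx : StrictMono x) :
    IsUnit (Emat n x).det := by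
  rw [← LDL n x hx, Matrix.det_mul, Matrix.det_mul, Matrix.det_transpose, Lmat_det,
    Matrix.det_diagonal]
  simp only [one_mul, mul_one]
  exact (Finset.prod_pos (fun j _ => dN_pos n x hx j)).ne'.isUnit

lemma uN_sq_div_dN (x : ℕ → ℝ) (hx : StrictMono x) (m : ℕ) :
    uN x (m+1) * ((dN x (m+1))⁻¹ * uN x (m+1)) = gfun (x (m+1) - x m) := by
  have hm : (m + 1) - 1 = m := by omega
  simp only [uN, dN, if_neg (Nat.succ_ne_zero m), hm]
  set e := Real.exp (x m - x (m+1)) with he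
  set E := Real.exp (x (m+1) - x m) with hE
  have heE : e * E = 1 := by
    rw [he, hE, ← Real.exp_add]
    simp
  have hepos : 0 < e := Real.exp_pos _
  have hlt : e < 1 := Real.exp_lt_one_iff.2 (by
    have := hx (Nat.lt_succ_self m)
    linarith)
  have hd : 1 - e^2 ≠ 0 := by nlinarith
  rw [gfun_eq, ← hE]
  have hE1 : E + 1 ≠ 0 := by positivity
  field_simp
  nlinarith [heE, hepos]

lemma sum_inv_Emat (n : ℕ) (x : ℕ → ℝ) (hx : StrictMono x) :
    ∑ i : Fin (n+1), ∑ j : Fin (n+1), (Emat n x)⁻¹ i j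
      = 1 + ∑ k ∈ Finset.range n, gfun (x (k+1) - x k) := by
  classical
  set L := Lmat n x with hL
  set D := Matrix.diagonal (fun j : Fin (n+1) => dN x j.val) with hD
  set u : Fin (n+1) → ℝ := fun j => uN x j.val with hu
  set o : Fin (n+1) → ℝ := fun _ => 1 with ho
  have hLdet : IsUnit L.det := by rw [hL, Lmat_det]; exact isUnit_one
  have hDdet : IsUnit D.det := by
    rw [hD, Matrix.det_diagonal]
    exact (Finset.prod_pos (fun j _ => dN_pos n x hx j)).ne'.isUnit
  have hLu : L *ᵥ u = o := by
    funext i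
    simp only [Matrix.mulVec, dotProduct, hu, ho]
    exact Lmat_mulVec_u n x i
  have hLinvo : L⁻¹ *ᵥ o = u := by
    rw [← hLu, Matrix.mulVec_mulVec, Matrix.nonsing_inv_mul L hLdet, Matrix.one_mulVec]
  have hEinv : (Emat n x)⁻¹ = (Lᵀ)⁻¹ * (D⁻¹ * L⁻¹) := by
    rw [← LDL n x hx, ← hL, ← hD, Matrix.mul_inv_rev, Matrix.mul_inv_rev]
  have hstep : ∑ i : Fin (n+1), ∑ j : Fin (n+1), (Emat n x)⁻¹ i j
      = o ⬝ᵥ ((Emat n x)⁻¹ *ᵥ o) := by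
    simp only [dotProduct, Matrix.mulVec, ho, one_mul, mul_one]
  rw [hstep, hEinv, ← Matrix.mulVec_mulVec, dotProduct_mulVec,
    ← Matrix.transpose_nonsing_inv, Matrix.vecMul_transpose, hLinvo,
    ← Matrix.mulVec_mulVec, hLinvo]
  have hDinvmat : D⁻¹ = Matrix.diagonal (fun j : Fin (n+1) => (dN x j.val)⁻¹) := by
    apply Matrix.inv_eq_right_inv
    have hone : (fun i : Fin (n+1) => dN x i.val * (dN x i.val)⁻¹) = fun _ => (1:ℝ) :=
      funext fun j => mul_inv_cancel₀ (dN_pos n x hx j).ne'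
    rw [hD, Matrix.diagonal_mul_diagonal, hone]
    exact Matrix.diagonal_one
  have hDinv : D⁻¹ *ᵥ u = fun j => (dN x j.val)⁻¹ * u j := by
    rw [hDinvmat]
    funext j
    rw [Matrix.mulVec_diagonal]
  rw [hDinv]
  have : u ⬝ᵥ (fun j => (dN x j.val)⁻¹ * u j)
      = ∑ j ∈ Finset.range (n+1), (fun m => uN x m * ((dN x m)⁻¹ * uN x m)) j := by
    rw [← Fin.sum_univ_eq_sum_range (fun m => uN x m * ((dN x m)⁻¹ * uN x m)) (n+1)]
    simp only [dotProduct, hu]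
  rw [this, Finset.sum_range_succ',
    Finset.sum_congr rfl (fun k _ => uN_sq_div_dN x hx k)]
  have h0 : uN x 0 * ((dN x 0)⁻¹ * uN x 0) = 1 := by simp [uN, dN]
  rw [h0]
  ring

lemma finMag_image (n : ℕ) (x : ℕ → ℝ) (hx : StrictMono x) :
    finMag ((Finset.range (n+1)).image x)
      = 1 + ∑ k ∈ Finset.range n, gfun (x (k+1) - x k) := by
  classical
  set s : Finset ℝ := (Finset.range (n+1)).image x with hs
  have hmem : ∀ i : Fin (n+1), x i.val ∈ s := fun i =>
    Finset.mem_image.2 ⟨i.val, Finset.mem_range.2 i.isLt, rfl⟩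
  set f : Fin (n+1) → {z // z ∈ s} := fun i => ⟨x i.val, hmem i⟩ with hf
  have hbij : Function.Bijective f := by
    constructor
    · intro i j hij
      have := congrArg Subtype.val hij
      simp only [hf] at this
      exact Fin.val_injective (hx.injective this)
    · rintro ⟨z, hz⟩
      obtain ⟨m, hm, hmz⟩ := Finset.mem_image.1 hz
      exact ⟨⟨m, Finset.mem_range.1 hm⟩, Subtype.ext hmz⟩
  set e : Fin (n+1) ≃ {z // z ∈ s} := Equiv.ofBijective f hbij with he
  have hsub : (Matrix.of fun a b : {z // z ∈ s} => Real.exp (-dist (a : ℝ) (b : ℝ)))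
      = (Emat n x).submatrix e.symm e.symm := by
    ext a b
    have ha : x ((e.symm a) : Fin (n+1)).val = (a : ℝ) :=
      congrArg Subtype.val (e.apply_symm_apply a)
    have hb : x ((e.symm b) : Fin (n+1)).val = (b : ℝ) :=
      congrArg Subtype.val (e.apply_symm_apply b)
    simp only [Matrix.of_apply, Matrix.submatrix_apply, Emat, ha, hb, Real.dist_eq]
  rw [finMag]
  rw [hsub, Matrix.inv_submatrix_equiv]
  simp only [Matrix.submatrix_apply]
  rw [Fintype.sum_equiv e.symm _ (fun i => ∑ j : Fin (n+1), (Emat n x)⁻¹ i j)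
    (fun a => Fintype.sum_equiv e.symm _ _ (fun b => rfl))]
  exact sum_inv_Emat n x hx

lemma exists_enum (s : Finset ℝ) (hs : s.Nonempty) :
    ∃ (n : ℕ) (x : ℕ → ℝ), StrictMono x ∧ s = (Finset.range (n+1)).image x := by
  classical
  set n := s.card - 1 with hn
  have hcard : s.card = n + 1 := (Nat.succ_pred_eq_of_pos (Finset.card_pos.2 hs)).symm
  set iso := s.orderIsoOfFin hcard with hiso
  set y : Fin (n+1) → ℝ := fun i => (iso i : ℝ) with hy
  have hymono : StrictMono y := fun i j hij => Subtype.coe_lt_coe.2 (iso.strictMono hij)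
  set x : ℕ → ℝ := fun m => if h : m < n + 1 then y ⟨m, h⟩ else y ⟨n, Nat.lt_succ_self n⟩ + (m - n : ℕ) with hx
  have hxy : ∀ i : Fin (n+1), x i.val = y i := by
    intro i
    simp only [hx, dif_pos i.isLt]
  have hxmono : StrictMono x := by
    apply strictMono_nat_of_lt_succ
    intro m
    by_cases h1 : m + 1 < n + 1
    · have h0 : m < n + 1 := Nat.lt_of_succ_lt h1
      simp only [hx, dif_pos h1, dif_pos h0]
      exact hymono (by simp [Fin.lt_def])
    · by_cases h0 : m < n + 1
      · have hmn : m = n := by omega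
        simp only [hx, dif_pos h0, dif_neg h1]
        have h2 : ((m + 1 - n : ℕ) : ℝ) = 1 := by
          rw [show m + 1 - n = 1 by omega]
          norm_num
        rw [h2]
        have h3 : y ⟨m, h0⟩ = y ⟨n, Nat.lt_succ_self n⟩ := by
          congr 1
          exact Fin.ext hmn
        rw [h3]
        linarith
      · simp only [hx, dif_neg h1, dif_neg h0]
        have : (m - n : ℕ) < (m + 1 - n : ℕ) := by omega
        have := (Nat.cast_lt (α := ℝ)).2 this
        linarith
  refine ⟨n, x, hxmono, ?_⟩
  ext z
  simp only [Finset.mem_image, Finset.mem_range]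
  constructor
  · intro hz
    refine ⟨(iso.symm ⟨z, hz⟩ : Fin (n+1)).val, (iso.symm ⟨z, hz⟩).isLt, ?_⟩
    rw [show ((iso.symm ⟨z, hz⟩ : Fin (n+1)).val) = ((iso.symm ⟨z, hz⟩ : Fin (n+1)) : ℕ) from rfl]
    rw [hxy (iso.symm ⟨z, hz⟩)]
    simp only [hy]
    rw [OrderIso.apply_symm_apply]
  · rintro ⟨m, hm, rfl⟩
    rw [hxy ⟨m, hm⟩]
    exact (iso ⟨m, hm⟩).2

lemma finMag_le (a b : ℝ) (s : Finset ℝ) (hs : s.Nonempty)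
    (hsub : ↑s ⊆ Set.Icc a b) : finMag s ≤ 1 + (b - a) / 2 := by
  obtain ⟨n, x, hxmono, himg⟩ := exists_enum s hs
  have hmem : ∀ m, m ≤ n → x m ∈ Set.Icc a b := by
    intro m hm
    apply hsub
    rw [himg]
    exact_mod_cast Finset.mem_image.2 ⟨m, Finset.mem_range.2 (Nat.lt_succ_of_le hm), rfl⟩
  rw [himg, finMag_image n x hxmono]
  have h1 : ∑ k ∈ Finset.range n, gfun (x (k+1) - x k)
      ≤ ∑ k ∈ Finset.range n, (x (k+1) - x k) / 2 := by
    apply Finset.sum_le_sum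
    intro k _
    exact gfun_le_half (le_of_lt (sub_pos.2 (hxmono (Nat.lt_succ_self k))))
  have h2 : ∑ k ∈ Finset.range n, (x (k+1) - x k) / 2 = (x n - x 0) / 2 := by
    rw [← Finset.sum_div, Finset.sum_range_sub (fun k => x k)]
  have h3 : x n ≤ b := (hmem n le_rfl).2
  have h4 : a ≤ x 0 := (hmem 0 (Nat.zero_le n)).1
  linarith

lemma finMag_uniform (a c : ℝ) (hc : 0 < c) (n : ℕ) (hn : 0 < n) :
    ∃ s : Finset ℝ, s.Nonempty ∧ ↑s ⊆ Set.Icc a (a + c) ∧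
      finMag s = 1 + n * gfun (c / n) := by
  have hn' : (0:ℝ) < n := Nat.cast_pos.2 hn
  set x : ℕ → ℝ := fun m => a + m * (c / n) with hx
  have hxmono : StrictMono x := by
    intro i j hij
    simp only [hx]
    have : (i:ℝ) < j := Nat.cast_lt.2 hij
    have hcn : 0 < c / n := div_pos hc hn'
    nlinarith
  obtain ⟨m, hmn⟩ : ∃ m : ℕ, n = m + 1 := ⟨n - 1, by omega⟩
  refine ⟨(Finset.range (n+1)).image x, ⟨x 0, Finset.mem_image.2 ⟨0, by simp, rfl⟩⟩, ?_, ?_⟩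
  · intro z hz
    obtain ⟨k, hk, rfl⟩ := Finset.mem_image.1 (by exact_mod_cast hz)
    rw [Finset.mem_range] at hk
    constructor
    · simp only [hx]
      have : (0:ℝ) ≤ k * (c / n) := by positivity
      linarith
    · simp only [hx]
      have hk' : (k:ℝ) ≤ n := by exact_mod_cast Nat.lt_succ_iff.1 hk
      have : (k:ℝ) * (c / n) ≤ n * (c / n) := by
        apply mul_le_mul_of_nonneg_right hk' (le_of_lt (div_pos hc hn'))
      rw [mul_div_cancel₀ c hn'.ne'] at this
      linarith
  · rw [finMag_image n x hxmono]
    have : ∀ k ∈ Finset.range n, gfun (x (k+1) - x k) = gfun (c / n) := by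
      intro k _
      congr 1
      simp only [hx]
      push_cast
      ring
    rw [Finset.sum_congr rfl this, Finset.sum_const, Finset.card_range, nsmul_eq_mul]

lemma mag_Icc (a b : ℝ) (hab : a ≤ b) :
    mag (Set.Icc a b) = 1 + (b - a) / 2 := by
  show sSup {m : ℝ | ∃ s : Finset ℝ, s.Nonempty ∧ ↑s ⊆ Set.Icc a b ∧ m = finMag s}
      = 1 + (b - a) / 2
  set T := {m : ℝ | ∃ s : Finset ℝ, s.Nonempty ∧ ↑s ⊆ Set.Icc a b ∧ m = finMag s} with hT
  have hub : ∀ m ∈ T, m ≤ 1 + (b - a) / 2 := by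
    rintro m ⟨s, h1, h2, rfl⟩
    exact finMag_le a b s h1 h2
  have hone : (1:ℝ) ∈ T := by
    have hxmono : StrictMono (fun m : ℕ => a + m) := by
      intro i j hij
      simp only
      exact add_lt_add_right (Nat.cast_lt.2 hij) a
    refine ⟨(Finset.range 1).image (fun m : ℕ => a + m), ?_, ?_, ?_⟩
    · exact ⟨a, Finset.mem_image.2 ⟨0, by simp, by simp⟩⟩
    · intro z hz
      obtain ⟨k, hk, rfl⟩ := Finset.mem_image.1 (by exact_mod_cast hz)
      rw [Finset.mem_range] at hk
      interval_cases k
      simp [hab]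
    · rw [finMag_image 0 (fun m : ℕ => a + m) hxmono]
      simp
  have hbdd : BddAbove T := ⟨1 + (b - a) / 2, hub⟩
  apply le_antisymm
  · exact csSup_le ⟨1, hone⟩ hub
  · rcases eq_or_lt_of_le hab with rfl | hlt
    · have := le_csSup hbdd hone
      norm_num
      linarith
    · set c := b - a with hc
      have hcpos : 0 < c := sub_pos.2 hlt
      apply le_of_forall_pos_le_add
      intro ε hε
      obtain ⟨n, hn⟩ := exists_nat_gt (max 1 (c^3 / (6 * ε)))
      have hn1 : 0 < n := by
        have : (1:ℝ) ≤ max 1 (c^3 / (6*ε)) := le_max_left _ _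
        have : (1:ℝ) < n := lt_of_le_of_lt this hn
        exact_mod_cast Nat.lt_of_lt_of_le Nat.zero_lt_one (by exact_mod_cast this.le)
      have hn' : (0:ℝ) < n := Nat.cast_pos.2 hn1
      obtain ⟨s, hs1, hs2, hs3⟩ := finMag_uniform a c hcpos n hn1
      have hmem : finMag s ∈ T := by
        refine ⟨s, hs1, ?_, hs3.symm ▸ rfl⟩
        · rwa [show a + c = b by rw [hc]; ring] at hs2
      have hge : 1 + c / 2 - ε ≤ finMag s := by
        rw [hs3]
        have hcn : 0 < c / n := div_pos hcpos hn'
        have hg := gfun_ge (le_of_lt hcn)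
        have h5 : (n:ℝ) * ((c/n)/2 - (c/n)^3/6) ≤ n * gfun (c/n) :=
          mul_le_mul_of_nonneg_left hg (le_of_lt hn')
        have h6 : (n:ℝ) * ((c/n)/2) = c / 2 := by
          field_simp
        have h7 : (n:ℝ) * ((c/n)^3/6) ≤ ε := by
          have hcube : (n:ℝ) * ((c/n)^3/6) = c^3 / (6 * n^2) := by
            field_simp
          rw [hcube]
          have hnc : c^3 / (6 * ε) < n := lt_of_le_of_lt (le_max_right _ _) hn
          rw [div_le_iff₀ (by positivity)]
          have h8 : c^3 < n * (6 * ε) := by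
            rw [div_lt_iff₀ (by positivity)] at hnc
            linarith
          have h1n : (1:ℝ) ≤ n := by exact_mod_cast hn1
          have h9 : (n:ℝ) ≤ n^2 := by nlinarith
          nlinarith
        nlinarith
      have := le_csSup hbdd hmem
      have hcb : c = b - a := hc
      linarith

lemma weight_integral (a b : ℝ) (hab : a ≤ b) (x : ℝ) (hx : x ∈ Set.Icc a b) :
    ∫ y, Real.exp (-|x - y|)
      ∂(((1 : ℝ≥0∞) / 2) • (Measure.dirac a + volume.restrict (Set.Icc a b) + Measure.dirac b))
      = 1 := by
  obtain ⟨hax, hxb⟩ := hx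
  set f : ℝ → ℝ := fun y => Real.exp (-|x - y|) with hf
  have hcont : Continuous f :=
    Real.continuous_exp.comp ((continuous_abs.comp (continuous_const.sub continuous_id)).neg)
  have hint2 : Integrable f (volume.restrict (Set.Icc a b)) := hcont.integrableOn_Icc
  have hbound : ∀ y, ‖f y‖ ≤ 1 := by
    intro y
    rw [Real.norm_eq_abs, abs_of_pos (Real.exp_pos _)]
    exact Real.exp_le_one_iff.2 (neg_nonpos.2 (abs_nonneg _))
  have hd1 : Integrable f (Measure.dirac a) :=
    (integrable_const (1:ℝ)).mono' hcont.aestronglyMeasurable (Filter.Eventually.of_forall hbound)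
  have hd2 : Integrable f (Measure.dirac b) :=
    (integrable_const (1:ℝ)).mono' hcont.aestronglyMeasurable (Filter.Eventually.of_forall hbound)
  rw [integral_smul_measure, integral_add_measure (hd1.add_measure hint2) hd2,
    integral_add_measure hd1 hint2, integral_dirac f a, integral_dirac f b]
  have hIcc : ∫ y in Set.Icc a b, f y = 2 - Real.exp (a - x) - Real.exp (x - b) := by
    rw [integral_Icc_eq_integral_Ioc, ← intervalIntegral.integral_of_le hab]
    have hsplit : ∫ y in a..b, f y = (∫ y in a..x, f y) + ∫ y in x..b, f y :=
      (intervalIntegral.integral_add_adjacent_intervals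
        (hcont.intervalIntegrable a x) (hcont.intervalIntegrable x b)).symm
    rw [hsplit]
    have h1 : ∫ y in a..x, f y = ∫ y in a..x, Real.exp (y - x) := by
      apply intervalIntegral.integral_congr
      intro y hy
      rw [Set.uIcc_of_le hax] at hy
      simp only [hf]
      rw [abs_of_nonneg (by linarith [hy.2] : (0:ℝ) ≤ x - y)]
      congr 1
      ring
    have h2 : ∫ y in x..b, f y = ∫ y in x..b, Real.exp (x - y) := by
      apply intervalIntegral.integral_congr
      intro y hy
      rw [Set.uIcc_of_le hxb] at hy
      simp only [hf]
      rw [abs_of_nonpos (by linarith [hy.1] : x - y ≤ 0)]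
      congr 1
      ring
    rw [h1, h2, intervalIntegral.integral_comp_sub_right Real.exp x,
      intervalIntegral.integral_comp_sub_left Real.exp x]
    rw [integral_exp, integral_exp]
    simp
    ring
  rw [hIcc]
  have hfa : f a = Real.exp (a - x) := by
    simp only [hf]
    rw [abs_of_nonneg (by linarith : (0:ℝ) ≤ x - a)]
    congr 1
    ring
  have hfb : f b = Real.exp (x - b) := by
    simp only [hf]
    rw [abs_of_nonpos (by linarith : x - b ≤ 0)]
    congr 1
    ring
  rw [hfa, hfb]
  rw [ENNReal.toReal_div]
  norm_num
  ring

lemma mu_univ (a b : ℝ) (hab : a ≤ b) :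
    ((((1 : ℝ≥0∞) / 2) •
        (Measure.dirac a + volume.restrict (Set.Icc a b) + Measure.dirac b))
      Set.univ).toReal = 1 + (b - a) / 2 := by
  rw [Measure.smul_apply, Measure.add_apply, Measure.add_apply]
  rw [Measure.dirac_apply_of_mem (Set.mem_univ a), Measure.dirac_apply_of_mem (Set.mem_univ b)]
  rw [Measure.restrict_apply_univ, Real.volume_Icc]
  rw [smul_eq_mul]
  rw [ENNReal.toReal_mul, ENNReal.toReal_div]
  rw [ENNReal.toReal_add, ENNReal.toReal_add]
  · rw [ENNReal.toReal_ofReal (by linarith : (0:ℝ) ≤ b - a)]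
    norm_num
    ring
  · exact ENNReal.one_ne_top
  · exact ENNReal.ofReal_ne_top
  · exact (ENNReal.add_ne_top.2 ⟨ENNReal.one_ne_top, ENNReal.ofReal_ne_top⟩)
  · exact ENNReal.one_ne_top

/-- The measure `μ = ½(δ_a + λ|_{[a,b]} + δ_b)` is a weight measure on
the interval `[a,b] ⊆ ℝ`, and consequently the magnitude of `[a,b]` equals
`μ(ℝ) = 1 + (b - a)/2`. -/
theorem stmt_9 (a b : ℝ) (hab : a ≤ b) (μ : Measure ℝ)
    (hμ : μ = ((1 : ℝ≥0∞) / 2) •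
      (Measure.dirac a + volume.restrict (Set.Icc a b) + Measure.dirac b)) :
    (∀ x ∈ Set.Icc a b, ∫ y, Real.exp (-|x - y|) ∂μ = 1) ∧
    mag (Set.Icc a b) = (μ Set.univ).toReal ∧
    (μ Set.univ).toReal = 1 + (b - a) / 2 := by
  refine ⟨?_, ?_, ?_⟩
  · intro x hx
    rw [hμ]
    exact weight_integral a b hab x hx
  · rw [hμ, mu_univ a b hab]
    exact mag_Icc a b hab
  · rw [hμ]
    exact mu_univ a b hab
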